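/- For every α ∈ (0,1) and x > 0, the function Φ(x) := Γ(1-α)·Γ(αx+1)/Γ(α(x-1)+1) - 1 satisfies Φ(x) = ∫_0^∞ (1 - e^{-xy}) · e^{-y/α}/(1 - e^{-y/α})^{α+1} dy. -/

import Mathlib

open MeasureTheory Real Set Filter

lemma beta_cast {t : ℝ} (h0 : 0 ≤ t) (h1 : t ≤ 1) (a b : ℝ) :
    (t:ℂ) ^ ((a:ℂ) - 1) * (1 - (t:ℂ)) ^ ((b:ℂ) - 1)
      = ((t ^ (a-1) * (1-t) ^ (b-1) : ℝ) : ℂ) := by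
  rw [show ((a:ℂ)-1) = ((a-1:ℝ):ℂ) by push_cast; ring,
      show ((b:ℂ)-1) = ((b-1:ℝ):ℂ) by push_cast; ring,
      show ((1:ℂ)-(t:ℂ)) = ((1-t:ℝ):ℂ) by push_cast; ring,
      ← Complex.ofReal_cpow h0, ← Complex.ofReal_cpow (by linarith), Complex.ofReal_mul]

lemma real_beta {a b : ℝ} (ha : 0 < a) (hb : 0 < b) :
    ∫ t in Set.Ioo (0:ℝ) 1, t ^ (a - 1) * (1 - t) ^ (b - 1)
      = Real.Gamma a * Real.Gamma b / Real.Gamma (a + b) := by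
  have h1 := Complex.Gamma_mul_Gamma_eq_betaIntegral (s := (a : ℂ)) (t := (b : ℂ))
    (by simpa using ha) (by simpa using hb)
  have h2 : Complex.betaIntegral a b
      = ((∫ t in Set.Ioo (0:ℝ) 1, t ^ (a - 1) * (1 - t) ^ (b - 1) : ℝ) : ℂ) := by
    rw [Complex.betaIntegral, intervalIntegral.integral_of_le zero_le_one,
      MeasureTheory.integral_Ioc_eq_integral_Ioo]
    rw [setIntegral_congr_fun (g := fun t : ℝ => ((t ^ (a-1) * (1-t) ^ (b-1) : ℝ) : ℂ))
      measurableSet_Ioo (fun t ht => beta_cast ht.1.le ht.2.le a b)]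
    exact integral_ofReal
  rw [h2, ← Complex.ofReal_add, Complex.Gamma_ofReal, Complex.Gamma_ofReal,
    Complex.Gamma_ofReal, ← Complex.ofReal_mul, ← Complex.ofReal_mul] at h1
  have h3 := Complex.ofReal_inj.mp h1
  have hg : Real.Gamma (a + b) ≠ 0 := (Real.Gamma_pos_of_pos (by linarith)).ne'
  rw [h3]
  field_simp

/-- Elementary bound `1 - e^{-t} ≤ t`. -/
lemma one_sub_exp_neg_le (t : ℝ) : 1 - Real.exp (-t) ≤ t := by
  nlinarith [Real.add_one_le_exp (-t)]

/-- Elementary bound `t e^{-t} ≤ 1 - e^{-t}`. -/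
lemma mul_exp_neg_le_one_sub (t : ℝ) : t * Real.exp (-t) ≤ 1 - Real.exp (-t) := by
  have h1 := Real.add_one_le_exp t
  have h2 : Real.exp t * Real.exp (-t) = 1 := by
    rw [← Real.exp_add]; simp
  nlinarith [Real.exp_pos (-t)]

/-- A generic integrability criterion on `(0, ∞)`: a continuous nonnegative function bounded by
`C₁ y ^ e` near `0` (with `e > -1`) and by `C₂ e^{-b y}` near `∞` is integrable. -/
lemma integrableOn_Ioi_of_bounds {f : ℝ → ℝ} (hcont : ContinuousOn f (Set.Ioi 0))
    (hnn : ∀ y ∈ Set.Ioi (0:ℝ), 0 ≤ f y) {C₁ C₂ b e : ℝ} (hb : 0 < b) (he : -1 < e)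
    (h1 : ∀ y ∈ Set.Ioc (0:ℝ) 1, f y ≤ C₁ * y ^ e)
    (h2 : ∀ y ∈ Set.Ioi (1:ℝ), f y ≤ C₂ * Real.exp (-b * y)) :
    IntegrableOn f (Set.Ioi 0) := by
  rw [← Ioc_union_Ioi_eq_Ioi (zero_le_one : (0:ℝ) ≤ 1), integrableOn_union]
  constructor
  · have hg : IntegrableOn (fun y : ℝ => C₁ * y ^ e) (Set.Ioc 0 1) := by
      refine Integrable.const_mul ?_ C₁
      rw [← IntegrableOn, ← intervalIntegrable_iff_integrableOn_Ioc_of_le zero_le_one]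
      exact intervalIntegral.intervalIntegrable_rpow' he
    refine Integrable.mono hg ((hcont.mono (fun y hy => hy.1)).aestronglyMeasurable measurableSet_Ioc) ?_
    refine (ae_restrict_iff' measurableSet_Ioc).mpr (ae_of_all _ fun y hy => ?_)
    rw [Real.norm_eq_abs, abs_of_nonneg (hnn y hy.1)]
    exact (h1 y hy).trans (le_abs_self _)
  · have hg : IntegrableOn (fun y : ℝ => C₂ * Real.exp (-b * y)) (Set.Ioi 1) :=
      (exp_neg_integrableOn_Ioi 1 hb).const_mul C₂
    refine Integrable.mono hg ((hcont.mono (fun y (hy : (1:ℝ) < y) => (lt_trans one_pos hy : (0:ℝ) < y))).aestronglyMeasurable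
      measurableSet_Ioi) ?_
    refine (ae_restrict_iff' measurableSet_Ioi).mpr (ae_of_all _ fun y hy => ?_)
    rw [Real.norm_eq_abs, abs_of_nonneg (hnn y (lt_trans (one_pos : (0:ℝ) < 1) hy))]
    exact (h2 y hy).trans (le_abs_self _)


lemma base_pos {α : ℝ} (hα : 0 < α) {y : ℝ} (hy : 0 < y) : 0 < 1 - Real.exp (-y/α) := by
  have h : Real.exp (-y/α) < 1 := Real.exp_lt_one_iff.mpr
    (by rw [neg_div]; exact neg_lt_zero.mpr (div_pos hy hα))
  linarith

lemma base_lower {α : ℝ} (hα : 0 < α) {y : ℝ} (hy : 0 < y) (hy1 : y ≤ 1) :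
    Real.exp (-1/α) / α * y ≤ 1 - Real.exp (-y/α) := by
  simp only [neg_div]
  have h1 : (y/α) * Real.exp (-(y/α)) ≤ 1 - Real.exp (-(y/α)) := mul_exp_neg_le_one_sub (y/α)
  have h2 : Real.exp (-((1:ℝ)/α)) ≤ Real.exp (-(y/α)) := by
    apply Real.exp_le_exp.mpr
    apply neg_le_neg
    gcongr
  have h3 : 0 ≤ y / α := (div_pos hy hα).le
  calc Real.exp (-((1:ℝ)/α)) / α * y = (y/α) * Real.exp (-((1:ℝ)/α)) := by ring
    _ ≤ (y/α) * Real.exp (-(y/α)) := mul_le_mul_of_nonneg_left h2 h3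
    _ ≤ 1 - Real.exp (-(y/α)) := h1

lemma base_mono {α : ℝ} (hα : 0 < α) {y z : ℝ} (hyz : y ≤ z) :
    1 - Real.exp (-y/α) ≤ 1 - Real.exp (-z/α) := by
  have : Real.exp (-z/α) ≤ Real.exp (-y/α) := by
    apply Real.exp_le_exp.mpr
    rw [neg_div, neg_div]
    exact neg_le_neg ((div_le_div_iff_of_pos_right hα).mpr hyz)
  linarith

lemma int1 {α x : ℝ} (hα0 : 0 < α) (hα1 : α < 1) (hx : 0 < x) :
    IntegrableOn (fun y => Real.exp (-x*y) * (1 - Real.exp (-y/α)) ^ (-α)) (Set.Ioi 0) := by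
  set c : ℝ := Real.exp (-1/α) / α with hc
  have hcpos : 0 < c := by positivity
  refine integrableOn_Ioi_of_bounds ?_ ?_ (C₁ := c ^ (-α))
    (C₂ := (1 - Real.exp (-1/α)) ^ (-α)) (b := x) (e := -α) hx (by linarith) ?_ ?_
  · intro y hy
    have hb := base_pos hα0 hy
    exact (((Real.continuous_exp.comp (by fun_prop : Continuous fun y : ℝ => -x*y)).continuousAt).mul
      (((continuous_const.sub (Real.continuous_exp.comp
        (by fun_prop : Continuous fun y : ℝ => -y/α))).continuousAt).rpow_const
        (Or.inl hb.ne'))).continuousWithinAt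
  · intro y hy
    exact mul_nonneg (Real.exp_pos _).le (Real.rpow_nonneg (base_pos hα0 hy).le _)
  · intro y hy
    have hb := base_pos hα0 hy.1
    have hcy : c * y ≤ 1 - Real.exp (-y/α) := base_lower hα0 hy.1 hy.2
    have h2 : (1 - Real.exp (-y/α)) ^ (-α) ≤ (c*y) ^ (-α) :=
      Real.rpow_le_rpow_of_nonpos (mul_pos hcpos hy.1) hcy (by linarith)
    have h3 : Real.exp (-x*y) ≤ 1 :=
      (Real.exp_lt_one_iff.mpr (mul_neg_of_neg_of_pos (neg_lt_zero.mpr hx) hy.1)).le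
    calc Real.exp (-x*y) * (1 - Real.exp (-y/α)) ^ (-α)
        ≤ 1 * ((c*y) ^ (-α)) :=
          mul_le_mul h3 h2 (Real.rpow_nonneg hb.le _) zero_le_one
      _ = c ^ (-α) * y ^ (-α) := by rw [one_mul, Real.mul_rpow hcpos.le hy.1.le]
  · intro y hy
    have hy0 : (0:ℝ) < y := lt_trans one_pos hy
    have hb1 : (0:ℝ) < 1 - Real.exp (-1/α) := base_pos hα0 one_pos
    have hmono : 1 - Real.exp (-1/α) ≤ 1 - Real.exp (-y/α) := base_mono hα0 hy.le
    have h2 : (1 - Real.exp (-y/α)) ^ (-α) ≤ (1 - Real.exp (-1/α)) ^ (-α) :=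
      Real.rpow_le_rpow_of_nonpos hb1 hmono (by linarith)
    calc Real.exp (-x*y) * (1 - Real.exp (-y/α)) ^ (-α)
        ≤ Real.exp (-x*y) * (1 - Real.exp (-1/α)) ^ (-α) :=
          mul_le_mul_of_nonneg_left h2 (Real.exp_pos _).le
      _ = (1 - Real.exp (-1/α)) ^ (-α) * Real.exp (-x*y) := mul_comm _ _

lemma int2 {α x : ℝ} (hα0 : 0 < α) (hα1 : α < 1) (hx : 0 < x) :
    IntegrableOn (fun y => (1 - Real.exp (-x * y)) *
      (Real.exp (-y / α) / (1 - Real.exp (-y / α)) ^ (α + 1))) (Set.Ioi 0) := by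
  set c : ℝ := Real.exp (-1/α) / α with hc
  have hcpos : 0 < c := by positivity
  have hb1 : (0:ℝ) < 1 - Real.exp (-1/α) := base_pos hα0 one_pos
  refine integrableOn_Ioi_of_bounds ?_ ?_ (C₁ := x * c ^ (-(α+1)))
    (C₂ := ((1 - Real.exp (-1/α)) ^ (α+1))⁻¹) (b := 1/α) (e := -α)
    (by positivity) (by linarith) ?_ ?_
  · intro y hy
    have hb := base_pos hα0 hy
    refine (ContinuousAt.mul ?_ (ContinuousAt.div ?_ ?_ ?_)).continuousWithinAt
    · exact (continuous_const.sub (Real.continuous_exp.comp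
        (by fun_prop : Continuous fun y : ℝ => -x*y))).continuousAt
    · exact (Real.continuous_exp.comp (by fun_prop : Continuous fun y : ℝ => -y/α)).continuousAt
    · exact ((continuous_const.sub (Real.continuous_exp.comp
        (by fun_prop : Continuous fun y : ℝ => -y/α))).continuousAt).rpow_const (Or.inr (by linarith))
    · exact (Real.rpow_pos_of_pos hb _).ne'
  · intro y hy
    have hb := base_pos hα0 hy
    have h1 : Real.exp (-x*y) ≤ 1 := (Real.exp_lt_one_iff.mpr (mul_neg_of_neg_of_pos (neg_lt_zero.mpr hx) hy)).le
    exact mul_nonneg (by linarith)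
      (div_nonneg (Real.exp_pos _).le (Real.rpow_nonneg hb.le _))
  · intro y hy
    obtain ⟨hy0, hy1⟩ := hy
    have hb := base_pos hα0 hy0
    have hcy : c * y ≤ 1 - Real.exp (-y/α) := base_lower hα0 hy0 hy1
    have hxy1 : 1 - Real.exp (-x*y) ≤ x*y := by
      have := one_sub_exp_neg_le (x*y)
      rw [show -(x*y) = -x*y by ring] at this
      exact this
    have hpow : (c*y) ^ (α+1) ≤ (1 - Real.exp (-y/α)) ^ (α+1) :=
      Real.rpow_le_rpow (mul_pos hcpos hy0).le hcy (by linarith)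
    have hdiv : Real.exp (-y/α) / (1 - Real.exp (-y/α)) ^ (α+1) ≤ 1 / (c*y) ^ (α+1) :=
      div_le_div₀ zero_le_one (Real.exp_lt_one_iff.mpr (by
        rw [neg_div]; exact neg_lt_zero.mpr (div_pos hy0 hα0))).le
        (Real.rpow_pos_of_pos (mul_pos hcpos hy0) _) hpow
    have hnn : 0 ≤ 1 - Real.exp (-x*y) := by
      have : Real.exp (-x*y) ≤ 1 := (Real.exp_lt_one_iff.mpr (mul_neg_of_neg_of_pos (neg_lt_zero.mpr hx) hy0)).le
      linarith
    have step : (1 - Real.exp (-x*y)) * (Real.exp (-y/α) / (1 - Real.exp (-y/α)) ^ (α+1))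
        ≤ (x*y) * (1 / (c*y) ^ (α+1)) :=
      mul_le_mul hxy1 hdiv
        (div_nonneg (Real.exp_pos _).le (Real.rpow_nonneg hb.le _)) (mul_pos hx hy0).le
    refine step.trans (le_of_eq ?_)
    have e1 : y * y ^ (-(α+1)) = y ^ (-α) := by
      nth_rewrite 1 [← Real.rpow_one y]
      rw [← Real.rpow_add hy0, show (1 + -(α+1) : ℝ) = -α by ring]
    rw [Real.mul_rpow hcpos.le hy0.le, one_div, mul_inv,
      ← Real.rpow_neg hcpos.le, ← Real.rpow_neg hy0.le, ← e1]
    ring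
  · intro y hy
    have hy0 : (0:ℝ) < y := lt_trans one_pos hy
    have hb := base_pos hα0 hy0
    have hmono : 1 - Real.exp (-1/α) ≤ 1 - Real.exp (-y/α) := base_mono hα0 hy.le
    have hpow : (1 - Real.exp (-1/α)) ^ (α+1) ≤ (1 - Real.exp (-y/α)) ^ (α+1) :=
      Real.rpow_le_rpow hb1.le hmono (by linarith)
    have h1 : 1 - Real.exp (-x*y) ≤ 1 := by linarith [Real.exp_pos (-x*y)]
    have hnn : 0 ≤ 1 - Real.exp (-x*y) := by
      have : Real.exp (-x*y) ≤ 1 := (Real.exp_lt_one_iff.mpr (mul_neg_of_neg_of_pos (neg_lt_zero.mpr hx) hy0)).le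
      linarith
    have hdiv : Real.exp (-y/α) / (1 - Real.exp (-y/α)) ^ (α+1)
        ≤ Real.exp (-y/α) / (1 - Real.exp (-1/α)) ^ (α+1) :=
      div_le_div_of_nonneg_left (Real.exp_pos _).le
        (Real.rpow_pos_of_pos hb1 _) hpow
    have step : (1 - Real.exp (-x*y)) * (Real.exp (-y/α) / (1 - Real.exp (-y/α)) ^ (α+1))
        ≤ 1 * (Real.exp (-y/α) / (1 - Real.exp (-1/α)) ^ (α+1)) :=
      mul_le_mul h1 hdiv
        (div_nonneg (Real.exp_pos _).le (Real.rpow_nonneg hb.le _)) zero_le_one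
    refine step.trans (le_of_eq ?_)
    rw [one_mul, show -(1/α) * y = -y/α by ring]
    ring

lemma cv {α : ℝ} (hα : 0 < α) (x : ℝ) :
    ∫ t in Set.Ioo (0:ℝ) 1, t ^ (α*x - 1) * (1 - t) ^ (1 - α - 1)
      = α⁻¹ * ∫ y in Set.Ioi (0:ℝ), Real.exp (-x*y) * (1 - Real.exp (-y/α)) ^ (-α) := by
  have himg : (fun y : ℝ => Real.exp (-y/α)) '' (Set.Ioi 0) = Set.Ioo 0 1 := by
    ext t
    constructor
    · rintro ⟨y, hy, rfl⟩
      exact ⟨Real.exp_pos _, Real.exp_lt_one_iff.mpr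
        (by rw [neg_div]; exact neg_lt_zero.mpr (div_pos hy hα))⟩
    · intro ht
      refine ⟨-(α * Real.log t), ?_, ?_⟩
      · have := Real.log_neg ht.1 ht.2
        simp only [Set.mem_Ioi]
        nlinarith
      · simp only
        rw [neg_neg, mul_div_cancel_left₀ _ hα.ne', Real.exp_log ht.1]
  have hderiv : ∀ y ∈ Set.Ioi (0:ℝ), HasDerivWithinAt (fun y : ℝ => Real.exp (-y/α))
      (Real.exp (-y/α) * (-1/α)) (Set.Ioi 0) y := by
    intro y _
    exact (((hasDerivAt_id y).neg.div_const α).exp).hasDerivWithinAt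
  have hinj : Set.InjOn (fun y : ℝ => Real.exp (-y/α)) (Set.Ioi 0) := by
    intro a _ b _ hab
    simp only at hab
    have h := Real.exp_injective hab
    field_simp at h
    exact neg_inj.mp h
  have key := integral_image_eq_integral_abs_deriv_smul measurableSet_Ioi hderiv hinj
    (fun t => t ^ (α*x - 1) * (1 - t) ^ (1 - α - 1))
  rw [himg] at key
  rw [key, ← integral_const_mul]
  refine setIntegral_congr_fun measurableSet_Ioi fun y hy => ?_
  have hα' : α ≠ 0 := hα.ne'
  have habs : |Real.exp (-y/α) * (-1/α)| = Real.exp (-y/α) * α⁻¹ := by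
    rw [abs_mul, abs_of_pos (Real.exp_pos _), abs_div, abs_neg, abs_one, one_div]
    rw [abs_of_pos hα]
  have harg : -y/α + -y/α * (α*x - 1) = -x*y := by field_simp; ring
  rw [smul_eq_mul, habs, ← Real.exp_mul, show (1 - α - 1 : ℝ) = -α by ring]
  rw [show Real.exp (-x*y) = Real.exp (-y/α + -y/α * (α*x - 1)) by rw [harg],
    Real.exp_add]
  ring

lemma hasDerivAt_F {α x : ℝ} (hα0 : 0 < α) {y : ℝ} (hy : 0 < y) :
    HasDerivAt (fun y : ℝ => (1 - Real.exp (-x*y)) * (1 - Real.exp (-y/α)) ^ (-α))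
      (x * (Real.exp (-x*y) * (1 - Real.exp (-y/α)) ^ (-α))
        - (1 - Real.exp (-x * y)) * (Real.exp (-y / α) / (1 - Real.exp (-y / α)) ^ (α + 1))) y := by
  have hu := base_pos hα0 hy
  have d0 : HasDerivAt (fun y : ℝ => -x * y) (-x) y := by
    simpa using HasDerivAt.const_mul (-x) (hasDerivAt_id y)
  have d1 : HasDerivAt (fun y : ℝ => 1 - Real.exp (-x*y)) (-(Real.exp (-x*y) * (-x))) y :=
    (d0.exp).const_sub 1
  have d2 : HasDerivAt (fun y : ℝ => 1 - Real.exp (-y/α)) (-(Real.exp (-y/α) * (-1/α))) y :=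
    (((hasDerivAt_id y).neg.div_const α).exp).const_sub 1
  have d3 := d2.rpow_const (p := -α) (Or.inl hu.ne')
  have d4 := d1.mul d3
  convert d4 using 1
  · rfl
  · rfl
  · rfl
  have hne : (1 - Real.exp (-y/α)) ^ (α+1) ≠ 0 := (Real.rpow_pos_of_pos hu _).ne'
  rw [show (-α - 1 : ℝ) = -(α+1) by ring, Real.rpow_neg hu.le (α+1)]
  field_simp
  ring

/-- For every `α ∈ (0,1)` and `x > 0`, the function
`Φ(x) = Γ(1-α)·Γ(αx+1)/Γ(α(x-1)+1) - 1` equals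
`∫_0^∞ (1 - e^{-xy}) · e^{-y/α}/(1 - e^{-y/α})^{α+1} dy`. -/
theorem gammaRatio_eq_levyIntegral (α x : ℝ) (hα : α ∈ Set.Ioo (0:ℝ) 1) (hx : 0 < x) :
    Real.Gamma (1 - α) * Real.Gamma (α * x + 1) / Real.Gamma (α * (x - 1) + 1) - 1
      = ∫ y in Set.Ioi (0:ℝ),
          (1 - Real.exp (-x * y)) *
            (Real.exp (-y / α) / (1 - Real.exp (-y / α)) ^ (α + 1)) := by
  obtain ⟨hα0, hα1⟩ := hα
  have hax : 0 < α * x := mul_pos hα0 hx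
  have hb : 0 < 1 - α := by linarith
  -- value of the auxiliary integral I₁ = ∫ e^{-xy} (1-e^{-y/α})^{-α}
  have hI1 : ∫ y in Set.Ioi (0:ℝ), Real.exp (-x*y) * (1 - Real.exp (-y/α)) ^ (-α)
      = α * (Real.Gamma (α*x) * Real.Gamma (1-α) / Real.Gamma (α*x + (1-α))) := by
    have hbeta := real_beta (a := α*x) (b := 1-α) hax hb
    have hcv := cv hα0 x
    rw [← hbeta, hcv, ← mul_assoc, mul_inv_cancel₀ hα0.ne', one_mul]
  have hInt1 := int1 hα0 hα1 hx
  have hInt2 := int2 hα0 hα1 hx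
  have hIntA : IntegrableOn
      (fun y => x * (Real.exp (-x*y) * (1 - Real.exp (-y/α)) ^ (-α))) (Set.Ioi 0) :=
    hInt1.const_mul x
  set c : ℝ := Real.exp (-1/α) / α with hc
  have hcpos : 0 < c := by positivity
  -- continuity of F at 0 within [0, ∞)
  have hF0 : (1 - Real.exp (-x*(0:ℝ))) * (1 - Real.exp (-(0:ℝ)/α)) ^ (-α) = 0 := by
    simp
  have hcont0 : ContinuousWithinAt
      (fun y : ℝ => (1 - Real.exp (-x*y)) * (1 - Real.exp (-y/α)) ^ (-α)) (Set.Ici 0) 0 := by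
    rw [ContinuousWithinAt, hF0]
    have hev : ∀ᶠ y in nhdsWithin (0:ℝ) (Set.Ici 0), y ∈ Set.Icc (0:ℝ) 1 :=
      Filter.eventually_of_mem
        (Icc_mem_nhdsGE_of_mem (⟨le_refl 0, zero_lt_one⟩ : (0:ℝ) ∈ Set.Ico 0 1))
        (fun y hy => hy)
    apply squeeze_zero' (g := fun y => (x * c ^ (-α)) * y ^ (1-α))
    · filter_upwards [hev] with y hy
      have h1 : Real.exp (-x*y) ≤ 1 := by
        rw [← Real.exp_zero]
        exact Real.exp_le_exp.mpr (by nlinarith [hy.1])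
      have h2 : Real.exp (-y/α) ≤ 1 := by
        rw [← Real.exp_zero]
        apply Real.exp_le_exp.mpr
        rw [neg_div]
        exact neg_nonpos.mpr (div_nonneg hy.1 hα0.le)
      exact mul_nonneg (by linarith) (Real.rpow_nonneg (by linarith) _)
    · filter_upwards [hev] with y hy
      rcases eq_or_lt_of_le hy.1 with h0 | h0
      · rw [← h0]
        rw [show ((0:ℝ) ^ (1-α) : ℝ) = 0 from Real.zero_rpow (by linarith)]
        simp
      · have hcy : c * y ≤ 1 - Real.exp (-y/α) := base_lower hα0 h0 hy.2
        have hxy1 : 1 - Real.exp (-x*y) ≤ x*y := by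
          have := one_sub_exp_neg_le (x*y)
          rw [show -(x*y) = -x*y by ring] at this
          exact this
        have h2 : (1 - Real.exp (-y/α)) ^ (-α) ≤ (c*y) ^ (-α) :=
          Real.rpow_le_rpow_of_nonpos (mul_pos hcpos h0) hcy (by linarith)
        have hb' := base_pos hα0 h0
        have step : (1 - Real.exp (-x*y)) * (1 - Real.exp (-y/α)) ^ (-α)
            ≤ (x*y) * ((c*y) ^ (-α)) :=
          mul_le_mul hxy1 h2 (Real.rpow_nonneg hb'.le _) (by positivity)
        refine step.trans (le_of_eq ?_)
        have e1 : y * y ^ (-α) = y ^ (1-α) := by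
          nth_rewrite 1 [← Real.rpow_one y]
          rw [← Real.rpow_add h0, show (1 + -α : ℝ) = 1-α by ring]
        rw [Real.mul_rpow hcpos.le h0.le, ← e1]
        ring
    · have h0 : Filter.Tendsto (fun y : ℝ => y ^ (1-α)) (nhds 0) (nhds (0:ℝ)) := by
        have := Real.continuousAt_rpow_const 0 (1-α) (Or.inr (by linarith))
        simpa [Real.zero_rpow (show (1-α:ℝ) ≠ 0 by linarith)] using this.tendsto
      have h1 := h0.const_mul (x * c ^ (-α))
      rw [mul_zero] at h1
      exact h1.mono_left nhdsWithin_le_nhds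
  -- limit of F at infinity
  have htop : Filter.Tendsto
      (fun y : ℝ => (1 - Real.exp (-x*y)) * (1 - Real.exp (-y/α)) ^ (-α))
      Filter.atTop (nhds 1) := by
    have t1 : Filter.Tendsto (fun y : ℝ => Real.exp (-x*y)) Filter.atTop (nhds 0) := by
      apply Real.tendsto_exp_atBot.comp
      have h := Filter.Tendsto.const_mul_atTop hx tendsto_id
      have h2 := tendsto_neg_atTop_atBot.comp h
      exact h2.congr (fun y => by simp)
    have t2 : Filter.Tendsto (fun y : ℝ => Real.exp (-y/α)) Filter.atTop (nhds 0) := by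
      apply Real.tendsto_exp_atBot.comp
      have h := Filter.Tendsto.atTop_div_const hα0 (tendsto_id (α := ℝ) (x := Filter.atTop))
      have h2 := tendsto_neg_atTop_atBot.comp h
      exact h2.congr (fun y => by simp [neg_div])
    have t3 : Filter.Tendsto (fun y : ℝ => 1 - Real.exp (-y/α)) Filter.atTop (nhds 1) := by
      simpa using tendsto_const_nhds.sub t2
    have t4 := t3.rpow_const (p := -α) (Or.inl one_ne_zero)
    rw [Real.one_rpow] at t4
    have t5 : Filter.Tendsto (fun y : ℝ => 1 - Real.exp (-x*y)) Filter.atTop (nhds 1) := by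
      simpa using tendsto_const_nhds.sub t1
    simpa using t5.mul t4
  -- FTC on (0, ∞)
  have hFTC := integral_Ioi_of_hasDerivAt_of_tendsto
    (f' := fun y : ℝ => x * (Real.exp (-x*y) * (1 - Real.exp (-y/α)) ^ (-α))
        - (1 - Real.exp (-x * y)) * (Real.exp (-y / α) / (1 - Real.exp (-y / α)) ^ (α + 1)))
    hcont0 (fun y hy => hasDerivAt_F hα0 hy) (hIntA.sub hInt2) htop
  rw [hF0, sub_zero, integral_sub hIntA hInt2, integral_const_mul, hI1] at hFTC
  -- conclude
  have hΓpos : 0 < Real.Gamma (α*x + (1-α)) := Real.Gamma_pos_of_pos (by linarith)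
  have hGamma : Real.Gamma (α*x + 1) = (α*x) * Real.Gamma (α*x) := Real.Gamma_add_one hax.ne'
  rw [hGamma, show α * (x-1) + 1 = α*x + (1-α) by ring]
  have hkey : Real.Gamma (1-α) * ((α*x) * Real.Gamma (α*x)) / Real.Gamma (α*x + (1-α))
      = x * (α * (Real.Gamma (α*x) * Real.Gamma (1-α) / Real.Gamma (α*x + (1-α)))) := by
    field_simp
  rw [hkey]
  linarith [hFTC]
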